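/- Let F be a submodular set function with F(∅)=0 and G a decomposable graph with clique/junction-tree bound F_G. Then F_G(C) = F(C) for every clique C of G. -/

import Mathlib

open Finset

/-- for a submodular `F` with `F(∅) = 0` and a decomposable (triangulated)
graph `G` with maximal cliques `c : ι → Finset (Fin n)` and junction-tree separators `𝒯`,
the junction-tree bound `F_G(A) = ∑_{C ∈ 𝒞} F(C ∩ A) − ∑_{(C,D) ∈ 𝒯} F(C ∩ D ∩ A)`
is tight on every clique of `G`: `F_G(Cl) = F(Cl)` whenever `Cl` is a clique. -/
theorem junction_tree_bound_tight_on_cliques {n : ℕ} {ι : Type*} [Fintype ι] [DecidableEq ι]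
    (G : SimpleGraph (Fin n)) [DecidableRel G.Adj]
    (F : Finset (Fin n) → ℝ)
    (hsub : ∀ A B : Finset (Fin n), F (A ∪ B) + F (A ∩ B) ≤ F A + F B)
    (hF0 : F ∅ = 0)
    -- `G` is triangulated: the identity order is a perfect elimination ordering
    (hpeo : ∀ i : Fin n,
      G.IsClique ((univ.filter (fun j => G.Adj i j ∧ i < j) : Finset (Fin n)) : Set (Fin n)))
    -- `c` enumerates exactly the maximal cliques of `G`
    (c : ι → Finset (Fin n)) (hcinj : Function.Injective c)
    (hclique : ∀ i, G.IsClique (c i : Set (Fin n)))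
    (hmax : ∀ i, ∀ D : Finset (Fin n), G.IsClique (D : Set (Fin n)) → c i ⊆ D → D = c i)
    (hall : ∀ D : Finset (Fin n), G.IsClique (D : Set (Fin n)) →
      (∀ D' : Finset (Fin n), G.IsClique (D' : Set (Fin n)) → D ⊆ D' → D' = D) →
      ∃ i, c i = D)
    -- junction tree with running intersection property
    (𝒯 : Finset (ι × ι))
    (hirrefl : ∀ e ∈ 𝒯, e.1 ≠ e.2)
    (honce : ∀ e ∈ 𝒯, (e.2, e.1) ∉ 𝒯)
    (T : SimpleGraph ι)
    (hT : T = SimpleGraph.fromRel (fun i j => (i, j) ∈ 𝒯))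
    (htree : T.IsTree)
    (hRIP : ∀ i j k : ι, (∀ p : T.Walk i j, k ∈ p.support) → c i ∩ c j ⊆ c k) :
    ∀ Cl : Finset (Fin n), G.IsClique (Cl : Set (Fin n)) →
      (∑ i : ι, F (c i ∩ Cl)) - (∑ e ∈ 𝒯, F (c e.1 ∩ c e.2 ∩ Cl)) = F Cl := by
  classical
  intro Cl hCl
  haveI : Nonempty ι := htree.isConnected.nonempty
  -- find a maximal clique containing Cl
  obtain ⟨i0, hCl0⟩ : ∃ i, Cl ⊆ c i := by
    have hne : ((univ : Finset (Finset (Fin n))).filter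
        (fun D : Finset (Fin n) => G.IsClique (D : Set (Fin n)) ∧ Cl ⊆ D)).Nonempty :=
      ⟨Cl, by simp [hCl]⟩
    obtain ⟨D, hD, hmaxD⟩ := Finset.exists_max_image _ Finset.card hne
    simp only [mem_filter, mem_univ, true_and] at hD
    have hDmax : ∀ D' : Finset (Fin n), G.IsClique (D' : Set (Fin n)) → D ⊆ D' → D' = D := by
      intro D' hD' hsub'
      refine (Finset.eq_of_subset_of_card_le hsub' (hmaxD D' ?_)).symm
      simp only [mem_filter, mem_univ, true_and]
      exact ⟨hD', hD.2.trans hsub'⟩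
    obtain ⟨i, hi⟩ := hall D hD.1 hDmax
    exact ⟨i, hi ▸ hD.2⟩
  -- the unique path in the junction tree
  have hP : ∀ a b : ι, ∃ p : T.Walk a b, p.IsPath ∧ ∀ q : T.Walk a b, q.IsPath → q = p := by
    intro a b
    obtain ⟨p, hp, hu⟩ := htree.existsUnique_path a b
    exact ⟨p, hp, hu⟩
  let P : ∀ a b : ι, T.Walk a b := fun a b => (hP a b).choose
  have hPpath : ∀ a b, (P a b).IsPath := fun a b => (hP a b).choose_spec.1
  have hPuniq : ∀ a b (q : T.Walk a b), q.IsPath → q = P a b := fun a b => (hP a b).choose_spec.2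
  -- any walk passes through the vertices of the unique path
  have hwalk : ∀ a k, k ∈ (P a i0).support → ∀ w : T.Walk a i0, k ∈ w.support := by
    intro a k hk w
    have hb := hPuniq a i0 w.bypass w.bypass_isPath
    exact w.support_bypass_subset (hb ▸ hk)
  have hsep : ∀ a k, k ∈ (P a i0).support → c a ∩ Cl ⊆ c k := by
    intro a k hk x hx
    rw [Finset.mem_inter] at hx
    exact hRIP a i0 k (hwalk a k hk) (Finset.mem_inter.2 ⟨hx.1, hCl0 hx.2⟩)
  -- the start of a path is not in the dropUntil part
  have hnot : ∀ a b (hb : b ∈ (P a i0).support), b ≠ a →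
      a ∉ ((P a i0).dropUntil b hb).support := by
    intro a b hb hba ha
    have hnd := (hPpath a i0).support_nodup
    rw [← (P a i0).take_spec hb, SimpleGraph.Walk.support_append] at hnd
    have h1 : a ∈ ((P a i0).takeUntil b hb).support := SimpleGraph.Walk.start_mem_support _
    have h2 : a ∈ ((P a i0).dropUntil b hb).support.tail := by
      rw [SimpleGraph.Walk.support_eq_cons] at ha
      rcases List.mem_cons.1 ha with h | h
      · exact absurd h.symm hba
      · exact h
    exact (List.disjoint_of_nodup_append hnd) h1 h2
  have hAdjT : ∀ e ∈ 𝒯, T.Adj e.1 e.2 := by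
    intro e he
    rw [hT, SimpleGraph.fromRel_adj]
    exact ⟨hirrefl e he, Or.inl (by simpa using he)⟩
  have hforward : ∀ a b, T.Adj a b → ∀ hb : b ∈ (P a i0).support,
      a ∉ (P b i0).support := by
    intro a b h hb
    have hd : ((P a i0).dropUntil b hb).IsPath := (hPpath a i0).dropUntil hb
    have heq := hPuniq b i0 _ hd
    rw [← heq]
    exact hnot a b hb h.ne'
  have hexh : ∀ a b, T.Adj a b → a ∉ (P b i0).support → b ∈ (P a i0).support := by
    intro a b h ha
    by_contra hb
    have hp : (SimpleGraph.Walk.cons h.symm (P a i0)).IsPath := (hPpath a i0).cons hb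
    have heq := hPuniq b i0 _ hp
    apply ha
    rw [← heq, SimpleGraph.Walk.support_cons]
    exact List.mem_cons_of_mem _ (SimpleGraph.Walk.start_mem_support _)
  -- the "child" (farther-from-i0) endpoint of an edge
  let child : ι × ι → ι := fun e =>
    if e.2 ∈ (P e.1 i0).support then e.1 else e.2
  have hchild_spec : ∀ e ∈ 𝒯, ∃ a b, T.Adj a b ∧ child e = a ∧
      (e = (a, b) ∨ e = (b, a)) ∧ b ∈ (P a i0).support := by
    intro e he
    have hadj := hAdjT e he
    by_cases hc : e.2 ∈ (P e.1 i0).support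
    · exact ⟨e.1, e.2, hadj, if_pos hc, Or.inl rfl, hc⟩
    · exact ⟨e.2, e.1, hadj.symm, if_neg hc, Or.inr rfl, hexh e.2 e.1 hadj.symm hc⟩
  have hPnil : P i0 i0 = SimpleGraph.Walk.nil :=
    (hPuniq i0 i0 SimpleGraph.Walk.nil SimpleGraph.Walk.IsPath.nil).symm
  have hchild_ne : ∀ e ∈ 𝒯, child e ≠ i0 := by
    intro e he hc
    obtain ⟨a, b, hadj, hca, _, hbP⟩ := hchild_spec e he
    rw [hca] at hc
    subst hc
    rw [hPnil] at hbP
    simp only [SimpleGraph.Walk.support_nil, List.mem_singleton] at hbP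
    exact hadj.ne hbP.symm
  have hparent : ∀ a b, T.Adj a b → ∀ hb : b ∈ (P a i0).support,
      b = (P a i0).getVert 1 := by
    intro a b h hb
    have hd : ((P a i0).dropUntil b hb).IsPath := (hPpath a i0).dropUntil hb
    have hcons : (SimpleGraph.Walk.cons h ((P a i0).dropUntil b hb)).IsPath :=
      hd.cons (hnot a b hb h.ne')
    have heq := hPuniq a i0 _ hcons
    have h1 : (P a i0).getVert 1 = b := by
      rw [← heq]
      exact (SimpleGraph.Walk.getVert_cons_succ (n := 0) _ h).trans (SimpleGraph.Walk.getVert_zero _)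
    exact h1.symm
  have hinj : ∀ e ∈ 𝒯, ∀ e' ∈ 𝒯, child e = child e' → e = e' := by
    intro e he e' he' hcc
    obtain ⟨a, b, hab, hca, hee, hbP⟩ := hchild_spec e he
    obtain ⟨a', b', hab', hca', hee', hbP'⟩ := hchild_spec e' he'
    have haa : a = a' := by rw [← hca, ← hca', hcc]
    subst haa
    have hbb : b = b' := by
      rw [hparent a b hab hbP, hparent a b' hab' hbP']
    subst hbb
    rcases hee with rfl | rfl <;> rcases hee' with h2 | h2
    · exact h2.symm
    · exact absurd (h2 ▸ he') (honce (a, b) he)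
    · exact absurd (h2 ▸ he') (honce (b, a) he)
    · exact h2.symm
  have hsurj : ∀ i, i ≠ i0 → ∃ e ∈ 𝒯, child e = i := by
    intro i hi
    obtain ⟨b, hadj, q, hq⟩ := SimpleGraph.Walk.exists_eq_cons_of_ne hi (P i i0)
    have hbmem : b ∈ (P i i0).support := by
      rw [hq, SimpleGraph.Walk.support_cons]
      exact List.mem_cons_of_mem _ (SimpleGraph.Walk.start_mem_support _)
    have h2 : T.Adj i b := hadj
    rw [hT, SimpleGraph.fromRel_adj] at h2
    rcases h2.2 with h1 | h1
    · exact ⟨(i, b), h1, if_pos hbmem⟩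
    · refine ⟨(b, i), h1, ?_⟩
      have hni : i ∉ (P b i0).support := hforward i b hadj hbmem
      exact if_neg hni
  have hsum : ∑ e ∈ 𝒯, F (c e.1 ∩ c e.2 ∩ Cl) = ∑ i ∈ univ.erase i0, F (c i ∩ Cl) := by
    refine Finset.sum_bij (fun e _ => child e) ?_ ?_ ?_ ?_
    · intro e he
      exact Finset.mem_erase.2 ⟨hchild_ne e he, mem_univ _⟩
    · intro e he e' he' h
      exact hinj e he e' he' h
    · intro i hi
      obtain ⟨e, he, hce⟩ := hsurj i (Finset.mem_erase.1 hi).1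
      exact ⟨e, he, hce⟩
    · intro e he
      obtain ⟨a, b, hadj, hca, hee, hbP⟩ := hchild_spec e he
      have hkey : c a ∩ c b ∩ Cl = c a ∩ Cl := by
        apply Finset.Subset.antisymm
        · intro x hx
          simp only [Finset.mem_inter] at hx ⊢
          exact ⟨hx.1.1, hx.2⟩
        · intro x hx
          simp only [Finset.mem_inter] at hx ⊢
          exact ⟨⟨hx.1, hsep a b hbP (Finset.mem_inter.2 ⟨hx.1, hx.2⟩)⟩, hx.2⟩
      show F (c e.1 ∩ c e.2 ∩ Cl) = F (c (child e) ∩ Cl)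
      rw [hca]
      rcases hee with rfl | rfl
      · exact congrArg F hkey
      · show F (c b ∩ c a ∩ Cl) = F (c a ∩ Cl)
        rw [Finset.inter_comm (c b) (c a), hkey]
  rw [hsum, ← Finset.add_sum_erase univ (fun i => F (c i ∩ Cl)) (mem_univ i0),
    Finset.inter_eq_right.2 hCl0]
  ring
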